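/- Let n ≥ 3 be a natural number and define ψ : ℝⁿ → ℝ by ψ(x) = ((1 + |x|²)/2)^{(2−n)/2}, where |x| is the Euclidean norm. Then ψ and its gradient satisfy: n(n−1)·ω_n^{2/n} = (4(n−1)/(n−2)) · (∫_{ℝⁿ} |∇ψ(x)|² dx) / (∫_{ℝⁿ} ψ(x)^{2n/(n−2)} dx)^{(n−2)/n}, where ω_n = 2·π^{(n+1)/2}/Γ((n+1)/2) is the volume of the unit n-sphere Sⁿ ⊂ ℝ^{n+1}, ∇ψ denotes the (Fréchet) gradient of ψ, and the integrals are Lebesgue integrals over ℝⁿ (both of which are finite). -/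

import Mathlib

open MeasureTheory Real Set

lemma my_real_beta {u v : ℝ} (hu : 0 < u) (hv : 0 < v) :
    ∫ t in Ioo (0:ℝ) 1, t ^ (u - 1) * (1 - t) ^ (v - 1) =
      Gamma u * Gamma v / Gamma (u + v) := by
  have key := Complex.Gamma_mul_Gamma_eq_betaIntegral (s := (u:ℂ)) (t := (v:ℂ))
    (by simpa using hu) (by simpa using hv)
  have hbeta : Complex.betaIntegral (u:ℂ) (v:ℂ) =
      ((∫ t in Ioo (0:ℝ) 1, t ^ (u - 1) * (1 - t) ^ (v - 1) : ℝ) : ℂ) := by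
    rw [Complex.betaIntegral, intervalIntegral.integral_of_le zero_le_one,
      integral_Ioc_eq_integral_Ioo]
    rw [show ((∫ t in Ioo (0:ℝ) 1, t ^ (u - 1) * (1 - t) ^ (v - 1) : ℝ) : ℂ)
        = ∫ t in Ioo (0:ℝ) 1, ((t ^ (u - 1) * (1 - t) ^ (v - 1) : ℝ) : ℂ) from
      (integral_ofReal).symm]
    refine setIntegral_congr_fun measurableSet_Ioo fun x hx => ?_
    push_cast
    rw [Complex.ofReal_cpow hx.1.le, Complex.ofReal_cpow (by linarith [hx.2] : (0:ℝ) ≤ 1 - x)]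
    push_cast
    ring
  rw [hbeta, show ((u:ℂ) + v) = ((u + v : ℝ) : ℂ) by push_cast; ring,
    Complex.Gamma_ofReal, Complex.Gamma_ofReal, Complex.Gamma_ofReal, ← Complex.ofReal_mul,
    ← Complex.ofReal_mul] at key
  have h2 := Complex.ofReal_injective key
  rw [eq_div_iff (Real.Gamma_pos_of_pos (by linarith : (0:ℝ) < u + v)).ne']
  linarith [h2]


lemma my_image_Ioo : (fun t : ℝ => t / (1 - t)) '' Ioo 0 1 = Ioi 0 := by
  ext y
  constructor
  · rintro ⟨t, ⟨ht0, ht1⟩, rfl⟩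
    exact div_pos ht0 (by linarith)
  · intro hy
    refine ⟨y / (1 + y), ⟨div_pos hy (by linarith [hy.out]), ?_⟩, ?_⟩
    · rw [div_lt_one (by linarith [hy.out])]; linarith [hy.out]
    · have h1 : (1:ℝ) + y ≠ 0 := by linarith [hy.out]
      field_simp
      ring

lemma my_substep1 {b s : ℝ} (hb : 0 < b) (hbs : b < s) :
    ∫ u in Ioi (0:ℝ), u ^ (b - 1) * (1 + u) ^ (-s) =
      ∫ t in Ioo (0:ℝ) 1, t ^ (b - 1) * (1 - t) ^ (s - b - 1) := by
  rw [← my_image_Ioo,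
    integral_image_eq_integral_abs_deriv_smul measurableSet_Ioo
      (f' := fun t : ℝ => 1 / (1 - t) ^ 2)
      (fun t ht => by
        have h1 : (1:ℝ) - t ≠ 0 := by have := ht.2; intro h; simp only [mem_Ioo] at ht; linarith
        have := ((hasDerivAt_id t).div ((hasDerivAt_const t (1:ℝ)).sub (hasDerivAt_id t)) h1)
        refine (this.congr_deriv ?_).hasDerivWithinAt
        simp only [Pi.sub_apply, id]
        ring)
      (fun t ht t' ht' h => by
        simp only [mem_Ioo] at ht ht'
        have h1 : (1:ℝ) - t ≠ 0 := by linarith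
        have h2 : (1:ℝ) - t' ≠ 0 := by linarith
        field_simp at h
        linarith)]
  refine setIntegral_congr_fun measurableSet_Ioo fun t ht => ?_
  simp only [mem_Ioo] at ht
  have h1 : (0:ℝ) < 1 - t := by linarith
  have h2 : (1:ℝ) + t / (1 - t) = 1 / (1 - t) := by field_simp; ring
  rw [smul_eq_mul, h2, abs_of_pos (by positivity)]
  have e3 : 1/((1:ℝ)-t)^(2:ℕ) = (1-t) ^ (-(2:ℝ)) := by
    rw [one_div, ← rpow_natCast (1-t) 2, ← rpow_neg h1.le]
    norm_num
  have e1 : (t/(1-t)) ^ (b-1) = t^(b-1) * (1-t)^(-(b-1)) := by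
    rw [div_rpow ht.1.le h1.le, rpow_neg h1.le, div_eq_mul_inv]
  have e2 : ((1:ℝ)/(1-t)) ^ (-s) = (1-t)^s := by
    rw [one_div, ← rpow_neg_one, ← rpow_mul h1.le]
    norm_num
  rw [e3, e1, e2, show ((1:ℝ)-t) ^ (-(2:ℝ)) * (t^(b-1) * (1-t)^(-(b-1)) * (1-t)^s)
      = t^(b-1) * ((1-t) ^ (-(2:ℝ)) * (1-t)^(-(b-1)) * (1-t)^s) from by ring,
    ← rpow_add h1, ← rpow_add h1]
  congr 1
  ring

lemma my_int_Ioi {b s : ℝ} (hb : 0 < b) (hbs : b < s) :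
    ∫ u in Ioi (0:ℝ), u ^ (b - 1) * (1 + u) ^ (-s) =
      Gamma b * Gamma (s - b) / Gamma s := by
  rw [my_substep1 hb hbs]
  have := my_real_beta hb (by linarith : (0:ℝ) < s - b)
  rw [show b + (s - b) = s by ring] at this
  rw [← this]

lemma my_radial {a s : ℝ} (ha : 0 < a) (has : a < 2 * s) :
    ∫ y in Ioi (0:ℝ), y ^ (a - 1) * (1 + y ^ 2) ^ (-s) =
      Gamma (a/2) * Gamma (s - a/2) / (2 * Gamma s) := by
  have key := integral_comp_rpow_Ioi (fun u => u ^ (a/2 - 1) * (1 + u) ^ (-s))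
    (two_ne_zero (α := ℝ))
  have hcongr : ∫ x in Ioi (0:ℝ),
      (|(2:ℝ)| * x ^ ((2:ℝ) - 1)) • ((x ^ (2:ℝ)) ^ (a/2 - 1) * (1 + x ^ (2:ℝ)) ^ (-s))
      = ∫ x in Ioi (0:ℝ), 2 * (x ^ (a - 1) * (1 + x ^ 2) ^ (-s)) := by
    refine setIntegral_congr_fun measurableSet_Ioi fun x hx => ?_
    have hx0 : (0:ℝ) < x := hx
    have h2 : x ^ (2:ℝ) = x ^ 2 := by rw [← rpow_natCast x 2]; norm_num
    have h3 : (x ^ (2:ℝ)) ^ (a/2 - 1) = x ^ (a - 2) := by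
      rw [← rpow_mul hx0.le]
      congr 1
      ring
    rw [smul_eq_mul, h3, h2]
    rw [show |(2:ℝ)| = 2 by norm_num, show ((2:ℝ) - 1) = 1 by norm_num, rpow_one]
    rw [show (2:ℝ) * x * (x ^ (a-2) * (1 + x^2) ^ (-s))
        = 2 * ((x * x ^ (a-2)) * (1 + x^2) ^ (-s)) from by ring]
    rw [show x * x ^ (a-2) = x ^ (1:ℝ) * x ^ (a-2) from by rw [rpow_one], ← rpow_add hx0,
      show (1:ℝ) + (a - 2) = a - 1 from by ring]
  rw [hcongr] at key
  rw [integral_const_mul] at key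
  have hval := my_int_Ioi (b := a/2) (s := s) (by linarith) (by linarith)
  rw [hval] at key
  rw [show Gamma (a/2) * Gamma (s - a/2) / (2 * Gamma s)
      = (Gamma (a/2) * Gamma (s - a/2) / Gamma s) / 2 from by ring, ← key]
  ring

open InnerProductSpace in

lemma my_hasGradient {n : ℕ} (p : ℝ) (x : EuclideanSpace ℝ (Fin n)) :
    HasGradientAt (fun y : EuclideanSpace ℝ (Fin n) => ((1 + ‖y‖^2)/2) ^ p)
      ((p * ((1 + ‖x‖^2)/2) ^ (p - 1)) • x) x := by
  set t0 : ℝ := (1 + ‖x‖^2)/2 with ht0def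
  have ht0 : 0 < t0 := by positivity
  have hn2 : HasFDerivAt (fun y : EuclideanSpace ℝ (Fin n) => ‖y‖^2)
      (2 • (innerSL ℝ x)) x := by
    simpa using (hasFDerivAt_id x).norm_sq
  have hh : HasFDerivAt (fun y : EuclideanSpace ℝ (Fin n) => (1 + ‖y‖^2)/2)
      (((2:ℝ)⁻¹) • (2 • (innerSL ℝ x))) x := by
    have h' := (hn2.const_add 1).const_mul ((2:ℝ)⁻¹)
    have heq : (fun y : EuclideanSpace ℝ (Fin n) => (1 + ‖y‖^2)/2)
        = fun y => (2:ℝ)⁻¹ * (1 + ‖y‖^2) := by funext y; ring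
    rw [heq]
    exact h'
  have hg : HasDerivAt (fun t : ℝ => t ^ p) (p * t0 ^ (p - 1)) t0 :=
    Real.hasDerivAt_rpow_const (Or.inl ht0.ne')
  have hcomp := hg.comp_hasFDerivAt x hh
  rw [hasGradientAt_iff_hasFDerivAt]
  refine hcomp.congr_fderiv ?_
  ext y
  simp only [toDual_apply_apply, ContinuousLinearMap.smul_apply, ContinuousLinearMap.coe_smul',
    Pi.smul_apply, innerSL_apply_apply, smul_eq_mul]
  rw [real_inner_smul_left]
  ring


lemma my_spherical (n : ℕ) (hn : 1 ≤ n) (f : ℝ → ℝ) :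
    ∫ x : EuclideanSpace ℝ (Fin n), f ‖x‖
      = ((n:ℝ) * ((√π) ^ n / Gamma ((n:ℝ)/2 + 1))) * ∫ y in Ioi (0:ℝ), y ^ (n - 1 : ℕ) * f y := by
  haveI : Nonempty (Fin n) := ⟨⟨0, by omega⟩⟩
  haveI : Nontrivial (EuclideanSpace ℝ (Fin n)) := by
    apply Module.nontrivial_of_finrank_pos (R := ℝ)
    rw [finrank_euclideanSpace_fin]
    omega
  have key := MeasureTheory.integral_fun_norm_addHaar
    (volume : Measure (EuclideanSpace ℝ (Fin n))) f
  rw [key, finrank_euclideanSpace_fin]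
  have hball : ((volume : Measure (EuclideanSpace ℝ (Fin n))) (Metric.ball 0 1)).toReal
      = (√π) ^ n / Gamma ((n:ℝ)/2 + 1) := by
    rw [EuclideanSpace.volume_ball, Fintype.card_fin]
    simp only [ENNReal.ofReal_one, one_pow, one_mul]
    rw [ENNReal.toReal_ofReal (by positivity)]
  rw [measureReal_def, hball, nsmul_eq_mul, smul_eq_mul]
  rw [← mul_assoc]
  congr 1


lemma my_key (n : ℕ) (hn : 3 ≤ n) :
    (2:ℝ)^(n:ℕ) * (√π)^(n:ℕ) * Gamma ((n:ℝ)/2) / Gamma (n:ℝ)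
      = 2 * π ^ (((n:ℝ)+1)/2) / Gamma (((n:ℝ)+1)/2) := by
  have hΓn : 0 < Gamma (n:ℝ) := Gamma_pos_of_pos (by positivity)
  have hΓh : 0 < Gamma (((n:ℝ)+1)/2) := Gamma_pos_of_pos (by positivity)
  have hdup := Real.Gamma_mul_Gamma_add_half ((n:ℝ)/2)
  rw [show ((n:ℝ)/2 + 1/2) = ((n:ℝ)+1)/2 by ring, show 2*((n:ℝ)/2) = (n:ℝ) by ring] at hdup
  have hgn2 : Gamma ((n:ℝ)/2) = Gamma (n:ℝ) * 2^((1:ℝ)-n) * √π / Gamma (((n:ℝ)+1)/2) := by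
    rw [eq_div_iff hΓh.ne']
    linarith [hdup]
  have h2n : (2:ℝ)^(n:ℕ) * 2^((1:ℝ)-n) = 2 := by
    rw [← rpow_natCast (2:ℝ) n, ← rpow_add two_pos]
    norm_num
  have hpi : (√π)^(n:ℕ) * √π = π ^ (((n:ℝ)+1)/2) := by
    rw [sqrt_eq_rpow, ← rpow_natCast (π ^ ((1:ℝ)/2)) n, ← rpow_mul pi_pos.le,
      ← rpow_add pi_pos]
    congr 1
    ring
  rw [hgn2, show (2:ℝ)^(n:ℕ) * (√π)^(n:ℕ) * (Gamma (n:ℝ) * 2^((1:ℝ)-n) * √π / Gamma (((n:ℝ)+1)/2)) / Gamma (n:ℝ)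
      = ((2:ℝ)^(n:ℕ) * 2^((1:ℝ)-n)) * ((√π)^(n:ℕ) * √π) * (Gamma (n:ℝ) / Gamma (n:ℝ)) / Gamma (((n:ℝ)+1)/2) from by ring,
    div_self hΓn.ne', h2n, hpi, mul_one]

lemma my_intA (n : ℕ) (hn : 3 ≤ n) :
    ∫ x : EuclideanSpace ℝ (Fin n), ((1 + ‖x‖^2)/2) ^ (-(n:ℝ)) =
      2 * π ^ (((n:ℝ)+1)/2) / Gamma (((n:ℝ)+1)/2) := by
  have hn0 : (0:ℝ) < n := by positivity
  have hΓn : 0 < Gamma (n:ℝ) := Gamma_pos_of_pos hn0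
  have hΓ2 : 0 < Gamma ((n:ℝ)/2) := Gamma_pos_of_pos (by positivity)
  have h1 : (∫ x : EuclideanSpace ℝ (Fin n), ((1 + ‖x‖^2)/2) ^ (-(n:ℝ)))
      = ((n:ℝ) * ((√π) ^ n / Gamma ((n:ℝ)/2 + 1)))
        * ∫ y in Ioi (0:ℝ), y ^ (n - 1 : ℕ) * ((1 + y^2)/2) ^ (-(n:ℝ)) :=
    my_spherical n (by omega) (fun y => ((1 + y^2)/2) ^ (-(n:ℝ)))
  have h2 : (∫ y in Ioi (0:ℝ), y ^ (n - 1 : ℕ) * ((1 + y^2)/2) ^ (-(n:ℝ)))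
      = 2^(n:ℕ) * ∫ y in Ioi (0:ℝ), y ^ ((n:ℝ) - 1) * (1 + y^2) ^ (-(n:ℝ)) := by
    rw [← integral_const_mul]
    refine setIntegral_congr_fun measurableSet_Ioi fun y hy => ?_
    have hy0 : (0:ℝ) < y := hy
    have e1 : ((1 + y^2)/2 : ℝ) ^ (-(n:ℝ)) = (1 + y^2) ^ (-(n:ℝ)) / 2 ^ (-(n:ℝ)) :=
      div_rpow (by positivity) (by norm_num) _
    have e2 : (2:ℝ) ^ (-(n:ℝ)) = ((2:ℝ)^(n:ℕ))⁻¹ := by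
      rw [rpow_neg (by norm_num), rpow_natCast]
    have e3 : y ^ (n - 1 : ℕ) = y ^ ((n:ℝ) - 1) := by
      rw [← rpow_natCast y (n-1), Nat.cast_sub (by omega : 1 ≤ n), Nat.cast_one]
    rw [e1, e2, e3]
    field_simp
  have h3 := my_radial (a := (n:ℝ)) (s := (n:ℝ)) hn0 (by linarith)
  rw [show (n:ℝ) - (n:ℝ)/2 = (n:ℝ)/2 by ring] at h3
  have hG1 : Gamma ((n:ℝ)/2 + 1) = ((n:ℝ)/2) * Gamma ((n:ℝ)/2) :=
    Real.Gamma_add_one (by positivity)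
  rw [h1, h2, h3, hG1, ← my_key n hn]
  field_simp

lemma my_intB (n : ℕ) (hn : 3 ≤ n) :
    ∫ x : EuclideanSpace ℝ (Fin n), ((1 + ‖x‖^2)/2) ^ (-(n:ℝ)) * ‖x‖^2 =
      ((n:ℝ)/((n:ℝ)-2)) * (2 * π ^ (((n:ℝ)+1)/2) / Gamma (((n:ℝ)+1)/2)) := by
  have hn0 : (0:ℝ) < n := by positivity
  have hn3 : (3:ℝ) ≤ n := by exact_mod_cast hn
  have hΓn : 0 < Gamma (n:ℝ) := Gamma_pos_of_pos hn0
  have hΓ2 : 0 < Gamma ((n:ℝ)/2) := Gamma_pos_of_pos (by positivity)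
  have h1 : (∫ x : EuclideanSpace ℝ (Fin n), ((1 + ‖x‖^2)/2) ^ (-(n:ℝ)) * ‖x‖^2)
      = ((n:ℝ) * ((√π) ^ n / Gamma ((n:ℝ)/2 + 1)))
        * ∫ y in Ioi (0:ℝ), y ^ (n - 1 : ℕ) * (((1 + y^2)/2) ^ (-(n:ℝ)) * y^2) :=
    my_spherical n (by omega) (fun y => ((1 + y^2)/2) ^ (-(n:ℝ)) * y^2)
  have h2 : (∫ y in Ioi (0:ℝ), y ^ (n - 1 : ℕ) * (((1 + y^2)/2) ^ (-(n:ℝ)) * y^2))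
      = 2^(n:ℕ) * ∫ y in Ioi (0:ℝ), y ^ (((n:ℝ) + 2) - 1) * (1 + y^2) ^ (-(n:ℝ)) := by
    rw [← integral_const_mul]
    refine setIntegral_congr_fun measurableSet_Ioi fun y hy => ?_
    have hy0 : (0:ℝ) < y := hy
    have e1 : ((1 + y^2)/2 : ℝ) ^ (-(n:ℝ)) = (1 + y^2) ^ (-(n:ℝ)) / 2 ^ (-(n:ℝ)) :=
      div_rpow (by positivity) (by norm_num) _
    have e2 : (2:ℝ) ^ (-(n:ℝ)) = ((2:ℝ)^(n:ℕ))⁻¹ := by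
      rw [rpow_neg (by norm_num), rpow_natCast]
    have e3 : y ^ (n - 1 : ℕ) * y^2 = y ^ (((n:ℝ) + 2) - 1) := by
      rw [← pow_add, ← rpow_natCast y (n - 1 + 2)]
      congr 1
      have : (n - 1 + 2 : ℕ) = n + 1 := by omega
      rw [this]
      push_cast
      ring
    rw [e1, e2, div_inv_eq_mul, ← e3]
    ring
  have h3 := my_radial (a := (n:ℝ) + 2) (s := (n:ℝ)) (by positivity) (by linarith)
  rw [show (n:ℝ) - ((n:ℝ)+2)/2 = (n:ℝ)/2 - 1 by ring,
    show ((n:ℝ) + 2)/2 = (n:ℝ)/2 + 1 by ring] at h3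
  have hG1 : Gamma ((n:ℝ)/2 + 1) = ((n:ℝ)/2) * Gamma ((n:ℝ)/2) :=
    Real.Gamma_add_one (by positivity)
  have hne : (n:ℝ)/2 - 1 ≠ 0 := by intro h; nlinarith
  have hG2 := Real.Gamma_add_one hne
  rw [show (n:ℝ)/2 - 1 + 1 = (n:ℝ)/2 by ring] at hG2
  have hG2' : Gamma ((n:ℝ)/2 - 1) = Gamma ((n:ℝ)/2)/((n:ℝ)/2 - 1) := by
    rw [eq_div_iff hne]
    linarith [hG2]
  rw [h1, h2, h3, hG1, hG2', ← my_key n hn]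
  have hn2 : (n:ℝ) - 2 ≠ 0 := by intro h; nlinarith
  field_simp


/-- **Identity (3.6) in the proof of Lemma 3.2.** For `n ≥ 3` and
`ψ(x) = ((1+|x|²)/2)^{(2-n)/2}` on `ℝⁿ`, both `∫|∇ψ|²` and `∫ψ^{2n/(n-2)}` are finite and
`n(n-1)·ω_n^{2/n} = (4(n-1)/(n-2))·(∫|∇ψ|²)/(∫ψ^{2n/(n-2)})^{(n-2)/n}`, where
`ω_n = 2π^{(n+1)/2}/Γ((n+1)/2)` is the volume of the unit `n`-sphere. -/
theorem sobolev_quotient_of_psi (n : ℕ) (hn : 3 ≤ n)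
    (ψ : EuclideanSpace ℝ (Fin n) → ℝ)
    (hψ : ∀ x, ψ x = ((1 + ‖x‖^2)/2) ^ (((2:ℝ) - n)/2))
    (ωn : ℝ) (hωn : ωn = 2 * Real.pi ^ (((n:ℝ) + 1)/2) / Real.Gamma (((n:ℝ) + 1)/2)) :
    (Integrable fun x => ‖gradient ψ x‖^2) ∧
    (Integrable fun x => ψ x ^ ((2 * (n:ℝ))/((n:ℝ) - 2))) ∧
    (n:ℝ) * ((n:ℝ) - 1) * ωn ^ ((2:ℝ)/(n:ℝ)) =
      (4 * ((n:ℝ) - 1)/((n:ℝ) - 2)) * (∫ x, ‖gradient ψ x‖^2) /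
        (∫ x, ψ x ^ ((2 * (n:ℝ))/((n:ℝ) - 2))) ^ (((n:ℝ) - 2)/(n:ℝ)) := by
  classical
  have hn2 : ((n:ℝ)) - 2 ≠ 0 := by
    have : (3:ℝ) ≤ n := by exact_mod_cast hn
    intro h; nlinarith
  have hn0 : (0:ℝ) < n := by positivity
  have hψfun : ψ = fun x : EuclideanSpace ℝ (Fin n) =>
      ((1 + ‖x‖^2)/2) ^ (((2:ℝ) - n)/2) := funext hψ
  -- rewrite the rpow integrand
  have hAeq : (fun x : EuclideanSpace ℝ (Fin n) => ψ x ^ ((2 * (n:ℝ))/((n:ℝ) - 2)))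
      = fun x => ((1 + ‖x‖^2)/2) ^ (-(n:ℝ)) := by
    funext x
    rw [hψ x, ← Real.rpow_mul (by positivity)]
    congr 1
    field_simp
    ring
  -- rewrite the gradient integrand
  have hBeq : (fun x : EuclideanSpace ℝ (Fin n) => ‖gradient ψ x‖^2)
      = fun x => ((n:ℝ)-2)^2/4 * (((1 + ‖x‖^2)/2) ^ (-(n:ℝ)) * ‖x‖^2) := by
    funext x
    rw [hψfun, (my_hasGradient (((2:ℝ) - n)/2) x).gradient]
    have ht0 : (0:ℝ) < (1 + ‖x‖^2)/2 := by positivity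
    rw [norm_smul, mul_pow, Real.norm_eq_abs, sq_abs, mul_pow,
      ← Real.rpow_natCast (((1 + ‖x‖^2)/2) ^ ((((2:ℝ) - n)/2) - 1)) 2,
      ← Real.rpow_mul ht0.le]
    rw [show ((((2:ℝ) - n)/2) - 1) * ((2:ℕ):ℝ) = -(n:ℝ) by push_cast; ring]
    ring
  -- integrability of the gradient term
  have hint2 : Integrable (fun x : EuclideanSpace ℝ (Fin n) =>
      (2:ℝ)^(n:ℕ) * (1 + ‖x‖^2) ^ (-(2*((n:ℝ)-1))/2)) := by
    refine Integrable.const_mul ?_ _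
    refine integrable_rpow_neg_one_add_norm_sq ?_
    rw [finrank_euclideanSpace_fin]
    have : (3:ℝ) ≤ n := by exact_mod_cast hn
    linarith
  have he12 : ∀ x : EuclideanSpace ℝ (Fin n),
      ((1 + ‖x‖^2)/2 : ℝ) ^ (-(n:ℝ)) = 2^(n:ℕ) * (1 + ‖x‖^2) ^ (-(n:ℝ)) := by
    intro x
    rw [Real.div_rpow (by positivity) (by norm_num),
      show ((2:ℝ)) ^ (-(n:ℝ)) = ((2:ℝ)^(n:ℕ))⁻¹ by
        rw [Real.rpow_neg (by norm_num), Real.rpow_natCast], div_inv_eq_mul]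
    ring
  have hintB0 : Integrable (fun x : EuclideanSpace ℝ (Fin n) =>
      ((1 + ‖x‖^2)/2) ^ (-(n:ℝ)) * ‖x‖^2) := by
    refine hint2.mono' ?_ (Filter.Eventually.of_forall fun x => ?_)
    · refine Continuous.aestronglyMeasurable ?_
      refine Continuous.mul ?_ (continuous_norm.pow 2)
      refine Continuous.rpow_const ?_ fun x => Or.inl (by positivity)
      exact (continuous_const.add (continuous_norm.pow 2)).div_const 2
    · have hpos : (0:ℝ) < 1 + ‖x‖^2 := by positivity
      rw [Real.norm_eq_abs, abs_of_nonneg (by positivity), he12 x]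
      have hb : (1 + ‖x‖^2 : ℝ) ^ (-(n:ℝ)) * ‖x‖^2
          ≤ (1 + ‖x‖^2) ^ (-(n:ℝ)) * (1 + ‖x‖^2) := by
        refine mul_le_mul_of_nonneg_left ?_ (Real.rpow_nonneg hpos.le _)
        nlinarith [sq_nonneg (‖x‖ : ℝ)]
      have he : (1 + ‖x‖^2 : ℝ) ^ (-(n:ℝ)) * (1 + ‖x‖^2)
          = (1 + ‖x‖^2) ^ (-(2*((n:ℝ)-1))/2) := by
        nth_rewrite 2 [show (1 + ‖x‖^2 : ℝ) = (1 + ‖x‖^2) ^ (1:ℝ) by rw [Real.rpow_one]]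
        rw [← Real.rpow_add hpos]
        congr 1
        ring
      calc (2:ℝ)^(n:ℕ) * (1 + ‖x‖^2) ^ (-(n:ℝ)) * ‖x‖^2
          = (2:ℝ)^(n:ℕ) * ((1 + ‖x‖^2) ^ (-(n:ℝ)) * ‖x‖^2) := by ring
        _ ≤ (2:ℝ)^(n:ℕ) * ((1 + ‖x‖^2) ^ (-(n:ℝ)) * (1 + ‖x‖^2)) := by
            exact mul_le_mul_of_nonneg_left hb (by positivity)
        _ = (2:ℝ)^(n:ℕ) * (1 + ‖x‖^2) ^ (-(2*((n:ℝ)-1))/2) := by rw [he]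
  have hintA : Integrable (fun x : EuclideanSpace ℝ (Fin n) =>
      ((1 + ‖x‖^2)/2) ^ (-(n:ℝ))) := by
    have : (fun x : EuclideanSpace ℝ (Fin n) => ((1 + ‖x‖^2)/2) ^ (-(n:ℝ)))
        = fun x => (2:ℝ)^(n:ℕ) * (1 + ‖x‖^2) ^ (-(2*(n:ℝ))/2) := by
      funext x
      rw [he12 x]
      congr 2
      ring
    rw [this]
    refine Integrable.const_mul ?_ _
    refine integrable_rpow_neg_one_add_norm_sq ?_
    rw [finrank_euclideanSpace_fin]
    have : (3:ℝ) ≤ n := by exact_mod_cast hn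
    linarith
  -- the values of the two integrals
  have hω : 0 < ωn := by
    rw [hωn]
    have := Real.Gamma_pos_of_pos (show (0:ℝ) < ((n:ℝ)+1)/2 by positivity)
    positivity
  have hvalA : (∫ x : EuclideanSpace ℝ (Fin n), ((1 + ‖x‖^2)/2) ^ (-(n:ℝ))) = ωn := by
    rw [my_intA n hn, hωn]
  have hvalB : (∫ x : EuclideanSpace ℝ (Fin n),
      ((n:ℝ)-2)^2/4 * (((1 + ‖x‖^2)/2) ^ (-(n:ℝ)) * ‖x‖^2))
      = (n:ℝ)*((n:ℝ)-2)/4 * ωn := by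
    rw [integral_const_mul, my_intB n hn, hωn]
    field_simp
  refine ⟨by rw [hBeq]; exact hintB0.const_mul _, by rw [hAeq]; exact hintA, ?_⟩
  rw [hAeq, hBeq, hvalA, hvalB]
  -- final scalar identity
  have hsub : ωn / ωn ^ (((n:ℝ) - 2)/(n:ℝ)) = ωn ^ ((2:ℝ)/(n:ℝ)) := by
    nth_rewrite 1 [show ωn = ωn ^ (1:ℝ) by rw [Real.rpow_one]]
    rw [← Real.rpow_sub hω]
    congr 1
    field_simp
    ring
  rw [show (4 * ((n:ℝ) - 1)/((n:ℝ) - 2)) * ((n:ℝ)*((n:ℝ)-2)/4 * ωn) /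
        ωn ^ (((n:ℝ) - 2)/(n:ℝ))
      = ((4 * ((n:ℝ) - 1)/((n:ℝ) - 2)) * ((n:ℝ)*((n:ℝ)-2)/4)) *
        (ωn / ωn ^ (((n:ℝ) - 2)/(n:ℝ))) from by ring, hsub,
    show (4 * ((n:ℝ) - 1)/((n:ℝ) - 2)) * ((n:ℝ)*((n:ℝ)-2)/4) = (n:ℝ) * ((n:ℝ)-1) from by
      field_simp]
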